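/- Every function f : {0,1}^n → ℝ admits a decomposition f = f_0 + f_1 + ⋯ + f_{n−1}, where f_0 is submodular and, for each i = 1,…,n−1, the function f_i is {i}-submodular. In particular, the elementary submodular rank of every function on {0,1}^n is at most n. -/
import Mathlib


/-!
Statement 0: A function f : {0,1}^n → ℝ (identified with a function on subsets of [n])
is π-supermodular iff for all i ≠ j the signed elementary imset inequalities
τ_i τ_j A^{(ij)} f ≥ 0 hold.

We encode a tuple π of linear orders on {0,1} by its sign vector
τ : Fin n → Bool, where `true` means the standard order 0 < 1 (sign +1)
and `false` means the reversed order 1 < 0 (sign −1).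
-/

/-- Componentwise meet of two subsets (as indicator vectors) w.r.t. the
product order with sign vector `τ`. -/
def piMeet {n : ℕ} (τ : Fin n → Bool) (S T : Finset (Fin n)) : Finset (Fin n) :=
  Finset.univ.filter fun i => if τ i then i ∈ S ∧ i ∈ T else i ∈ S ∨ i ∈ T

/-- Componentwise join of two subsets (as indicator vectors) w.r.t. the
product order with sign vector `τ`. -/
def piJoin {n : ℕ} (τ : Fin n → Bool) (S T : Finset (Fin n)) : Finset (Fin n) :=
  Finset.univ.filter fun i => if τ i then i ∈ S ∨ i ∈ T else i ∈ S ∧ i ∈ T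

/-- `f` is supermodular w.r.t. the product order with sign vector `τ`. -/
def IsPiSupermodular {n : ℕ} (τ : Fin n → Bool) (f : Finset (Fin n) → ℝ) : Prop :=
  ∀ S T : Finset (Fin n), f S + f T ≤ f (piMeet τ S T) + f (piJoin τ S T)

/-- The sign τ_i ∈ {±1} of the i-th linear order, as a real number. -/
noncomputable def signR {n : ℕ} (τ : Fin n → Bool) (i : Fin n) : ℝ :=
  if τ i then 1 else -1

/-- The elementary imset expression: the row of `A^{(ij)} f` corresponding to
`z ⊆ [n] ∖ {i,j}`, namely `f(z) + f(z ∪ {i,j}) − f(z ∪ {i}) − f(z ∪ {j})`. -/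
def imsetExpr {n : ℕ} (f : Finset (Fin n) → ℝ) (i j : Fin n) (z : Finset (Fin n)) : ℝ :=
  f z + f (insert i (insert j z)) - f (insert i z) - f (insert j z)

/-- A set function is submodular: f(S∩T) + f(S∪T) ≤ f(S) + f(T). -/
def IsSubmodular {n : ℕ} (f : Finset (Fin n) → ℝ) : Prop :=
  ∀ S T : Finset (Fin n), f (S ∩ T) + f (S ∪ T) ≤ f S + f T

/-- The sign vector with −1 in coordinate `i` and +1 elsewhere. -/
def elemSign {n : ℕ} (i : Fin n) : Fin n → Bool := fun j => decide (j ≠ i)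

/-- `f` is {i}-submodular: −f is π-supermodular for the tuple of linear orders
whose sign vector has τ_i = −1 and τ_j = 1 for j ≠ i. -/
def IsElemSubmodular {n : ℕ} (i : Fin n) (f : Finset (Fin n) → ℝ) : Prop :=
  IsPiSupermodular (elemSign i) (fun S => -(f S))

/-!
Statement 5: every f : {0,1}^n → ℝ decomposes as f = f₀ + f₁ + ⋯ + f_{n−1}
with f₀ submodular and f_i {i}-submodular for each of the n−1 remaining
coordinates; hence the elementary submodular rank is at most n.
(We index the coordinates by `Fin n`, with `0` playing the role of the
coordinate not used for an elementary summand.)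
-/
open Finset
noncomputable def hfun {n : ℕ} (i : Fin n) (S : Finset (Fin n)) : ℝ :=
  if i ∈ S then ((S.erase i).card : ℝ) else 0

lemma erase_piMeet {n : ℕ} (i : Fin n) (S T : Finset (Fin n)) :
    (piMeet (elemSign i) S T).erase i = (S ∩ T).erase i := by
  ext j
  by_cases h : j = i <;> simp [piMeet, elemSign, h, Finset.mem_erase]

lemma erase_piJoin {n : ℕ} (i : Fin n) (S T : Finset (Fin n)) :
    (piJoin (elemSign i) S T).erase i = (S ∪ T).erase i := by
  ext j
  by_cases h : j = i <;> simp [piJoin, elemSign, h, Finset.mem_erase]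

lemma mem_piMeet_self {n : ℕ} (i : Fin n) (S T : Finset (Fin n)) :
    i ∈ piMeet (elemSign i) S T ↔ i ∈ S ∨ i ∈ T := by
  simp [piMeet, elemSign]

lemma mem_piJoin_self {n : ℕ} (i : Fin n) (S T : Finset (Fin n)) :
    i ∈ piJoin (elemSign i) S T ↔ i ∈ S ∧ i ∈ T := by
  simp [piJoin, elemSign]

lemma hfun_piMeet {n : ℕ} (i : Fin n) (S T : Finset (Fin n)) :
    hfun i (piMeet (elemSign i) S T)
      = if i ∈ S ∨ i ∈ T then (((S ∩ T).erase i).card : ℝ) else 0 := by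
  unfold hfun
  by_cases h : i ∈ S ∨ i ∈ T
  · rw [if_pos ((mem_piMeet_self i S T).mpr h), if_pos h, erase_piMeet]
  · rw [if_neg (fun hc => h ((mem_piMeet_self i S T).mp hc)), if_neg h]

lemma hfun_piJoin {n : ℕ} (i : Fin n) (S T : Finset (Fin n)) :
    hfun i (piJoin (elemSign i) S T)
      = if i ∈ S ∧ i ∈ T then (((S ∪ T).erase i).card : ℝ) else 0 := by
  unfold hfun
  by_cases h : i ∈ S ∧ i ∈ T
  · rw [if_pos ((mem_piJoin_self i S T).mpr h), if_pos h, erase_piJoin]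
  · rw [if_neg (fun hc => h ((mem_piJoin_self i S T).mp hc)), if_neg h]

lemma hfun_key {n : ℕ} (i : Fin n) (S T : Finset (Fin n)) :
    hfun i (piMeet (elemSign i) S T) + hfun i (piJoin (elemSign i) S T)
      ≤ hfun i S + hfun i T := by
  rw [hfun_piMeet, hfun_piJoin]
  unfold hfun
  by_cases hS : i ∈ S <;> by_cases hT : i ∈ T <;>
    simp only [hS, hT, if_pos, if_neg, true_and, and_true, true_or, or_true,
      if_true, if_false, and_self, or_self, not_false_iff, add_zero, zero_add]
  · -- both
    have h1 : (S ∩ T).erase i = S.erase i ∩ T.erase i := by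
      ext j; simp only [mem_erase, mem_inter]; tauto
    have h2 : (S ∪ T).erase i = S.erase i ∪ T.erase i := by
      ext j; simp only [mem_erase, mem_union]; tauto
    have key : ((S ∩ T).erase i).card + ((S ∪ T).erase i).card
        = (S.erase i).card + (T.erase i).card := by
      rw [h1, h2]; exact card_inter_add_card_union _ _
    have := congrArg (fun k : ℕ => (k : ℝ)) key
    push_cast at this
    linarith
  · exact_mod_cast Finset.card_le_card (erase_subset_erase i inter_subset_left)
  · exact_mod_cast Finset.card_le_card (erase_subset_erase i inter_subset_right)
  · exact le_rfl

lemma gval {n : ℕ} (i0 : Fin n) (S : Finset (Fin n)) :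
    ∑ j ∈ Finset.univ.erase i0, hfun j S
      = ((S.erase i0).card : ℝ) * ((S.card : ℝ) - 1) := by
  have h1 : ∑ j ∈ Finset.univ.erase i0, hfun j S
      = ∑ j ∈ (Finset.univ.erase i0).filter (· ∈ S), ((S.erase j).card : ℝ) := by
    rw [Finset.sum_filter]
    exact Finset.sum_congr rfl fun j _ => rfl
  have h2 : (Finset.univ.erase i0).filter (· ∈ S) = S.erase i0 := by
    ext j; simp [Finset.mem_erase, and_comm]
  rw [h1, h2]
  calc ∑ j ∈ S.erase i0, ((S.erase j).card : ℝ)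
      = ∑ _j ∈ S.erase i0, ((S.card : ℝ) - 1) := by
        refine Finset.sum_congr rfl fun j hj => ?_
        exact Finset.cast_card_erase_of_mem (Finset.mem_of_mem_erase hj)
    _ = ((S.erase i0).card : ℝ) * ((S.card : ℝ) - 1) := by
        rw [Finset.sum_const, nsmul_eq_mul]

lemma deltaG {n : ℕ} (i0 : Fin n) (S T : Finset (Fin n)) (h1 : ¬ S ⊆ T) (h2 : ¬ T ⊆ S) :
    ((S.erase i0).card : ℝ) * ((S.card : ℝ) - 1)
      + ((T.erase i0).card : ℝ) * ((T.card : ℝ) - 1) + 1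
    ≤ (((S ∩ T).erase i0).card : ℝ) * (((S ∩ T).card : ℝ) - 1)
      + (((S ∪ T).erase i0).card : ℝ) * (((S ∪ T).card : ℝ) - 1) := by
  have hpu : ((S ∩ T).card : ℝ) + ((S ∪ T).card : ℝ) = (S.card : ℝ) + (T.card : ℝ) := by
    exact_mod_cast congrArg (Nat.cast (R := ℝ)) (card_inter_add_card_union S T)
  have hps : (S ∩ T).card < S.card := by
    refine Finset.card_lt_card (Finset.ssubset_iff_subset_ne.mpr ⟨inter_subset_left, ?_⟩)
    intro hc; exact h1 (Finset.inter_eq_left.mp hc)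
  have hpt : (S ∩ T).card < T.card := by
    refine Finset.card_lt_card (Finset.ssubset_iff_subset_ne.mpr ⟨inter_subset_right, ?_⟩)
    intro hc; exact h2 (Finset.inter_eq_right.mp hc)
  have hx : ((S ∩ T).card : ℝ) + 1 ≤ (S.card : ℝ) := by exact_mod_cast hps
  have hy : ((S ∩ T).card : ℝ) + 1 ≤ (T.card : ℝ) := by exact_mod_cast hpt
  have hprod : (0:ℝ) ≤ ((S.card : ℝ) - (S ∩ T).card - 1) * ((T.card : ℝ) - (S ∩ T).card - 1) :=
    mul_nonneg (by linarith) (by linarith)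
  by_cases e1 : i0 ∈ S <;> by_cases e2 : i0 ∈ T
  · rw [Finset.cast_card_erase_of_mem e1, Finset.cast_card_erase_of_mem e2,
      Finset.cast_card_erase_of_mem (Finset.mem_inter.mpr ⟨e1, e2⟩),
      Finset.cast_card_erase_of_mem (Finset.mem_union_left _ e1)]
    nlinarith [hprod, hx, hy, hpu]
  · rw [Finset.cast_card_erase_of_mem e1, Finset.erase_eq_of_notMem e2,
      Finset.erase_eq_of_notMem (fun hc => e2 (Finset.mem_inter.mp hc).2),
      Finset.cast_card_erase_of_mem (Finset.mem_union_left _ e1)]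
    nlinarith [hprod, hx, hy, hpu]
  · rw [Finset.erase_eq_of_notMem e1, Finset.cast_card_erase_of_mem e2,
      Finset.erase_eq_of_notMem (fun hc => e1 (Finset.mem_inter.mp hc).1),
      Finset.cast_card_erase_of_mem (Finset.mem_union_right _ e2)]
    nlinarith [hprod, hx, hy, hpu]
  · rw [Finset.erase_eq_of_notMem e1, Finset.erase_eq_of_notMem e2,
      Finset.erase_eq_of_notMem (fun hc => e1 (Finset.mem_inter.mp hc).1),
      Finset.erase_eq_of_notMem (fun hc => e1 ((Finset.mem_union.mp hc).resolve_right e2))]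
    nlinarith [hprod, hx, hy, hpu]

theorem statement5 (n : ℕ) (hn : 0 < n) (f : Finset (Fin n) → ℝ) :
    ∃ F : Fin n → Finset (Fin n) → ℝ,
      IsSubmodular (F ⟨0, hn⟩) ∧
      (∀ i : Fin n, i ≠ ⟨0, hn⟩ → IsElemSubmodular i (F i)) ∧
      f = ∑ i, F i := by
  classical
  set i0 : Fin n := ⟨0, hn⟩ with hi0
  set C : ℝ := 4 * ∑ S : Finset (Fin n), |f S| with hCdef
  have hB : ∀ S : Finset (Fin n), |f S| ≤ ∑ S : Finset (Fin n), |f S| := fun S =>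
    Finset.single_le_sum (f := fun S => |f S|) (fun _ _ => abs_nonneg _) (Finset.mem_univ S)
  have hsum0 : (0:ℝ) ≤ ∑ S : Finset (Fin n), |f S| :=
    Finset.sum_nonneg fun _ _ => abs_nonneg _
  have hC0 : 0 ≤ C := by rw [hCdef]; linarith
  refine ⟨fun i => if i = i0 then (fun S => f S - C * ∑ j ∈ Finset.univ.erase i0, hfun j S)
    else (fun S => C * hfun i S), ?_, ?_, ?_⟩
  · -- submodularity of the first summand
    simp only [if_pos rfl, if_true]
    intro S T
    dsimp only
    by_cases hST : S ⊆ T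
    · apply le_of_eq
      rw [Finset.inter_eq_left.mpr hST, Finset.union_eq_right.mpr hST]
      try ring
    by_cases hTS : T ⊆ S
    · apply le_of_eq
      rw [Finset.inter_eq_right.mpr hTS, Finset.union_eq_left.mpr hTS]
      try ring
    · rw [gval, gval, gval, gval]
      have hD := deltaG i0 S T hST hTS
      have hf : f (S ∩ T) + f (S ∪ T) - f S - f T ≤ C := by
        have h1 := abs_le.mp (hB (S ∩ T))
        have h2 := abs_le.mp (hB (S ∪ T))
        have h3 := abs_le.mp (hB S)
        have h4 := abs_le.mp (hB T)
        rw [hCdef]; linarith [h1.2, h2.2, h3.1, h4.1]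
      nlinarith [mul_nonneg hC0 (by linarith [hD] :
        (0:ℝ) ≤ (((S ∩ T).erase i0).card : ℝ) * (((S ∩ T).card : ℝ) - 1)
          + (((S ∪ T).erase i0).card : ℝ) * (((S ∪ T).card : ℝ) - 1)
          - ((S.erase i0).card : ℝ) * ((S.card : ℝ) - 1)
          - ((T.erase i0).card : ℝ) * ((T.card : ℝ) - 1) - 1)]
  · -- elementary submodularity of the other summands
    intro i hi
    simp only [if_neg hi]
    intro S T
    have hk := hfun_key i S T
    have := mul_le_mul_of_nonneg_left hk hC0
    simp only
    nlinarith [this]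
  · -- the decomposition sums to f
    funext S
    rw [Finset.sum_apply]
    rw [← Finset.add_sum_erase _ _ (Finset.mem_univ i0)]
    simp only [if_pos rfl, if_true]
    have : ∑ i ∈ Finset.univ.erase i0,
        (if i = i0 then (fun S => f S - C * ∑ j ∈ Finset.univ.erase i0, hfun j S)
          else (fun S => C * hfun i S)) S
        = ∑ i ∈ Finset.univ.erase i0, C * hfun i S := by
      refine Finset.sum_congr rfl fun i hi => ?_
      rw [if_neg (Finset.mem_erase.mp hi).1]
    rw [this, ← Finset.mul_sum]
    ring
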